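/- For each of the nine distinguished generators (x,y), let D(x,y) ⊆ duads be the image under the bijection β of the set of nonzero vectors of R(x,y) ∩ (J × J). Then there exist a duad p and three distinct synthemes L1, L2, L3, each containing p, such that D(x,y) = L1 ∪ L2 ∪ L3 and Li ∩ Lj = {p} for all i ≠ j; in particular D(x,y) consists of 7 duads forming three concurrent lines of the doily. -/
import Mathlib


open Matrix

set_option maxRecDepth 40000
set_option maxHeartbeats 2000000

/-- The matrix m(a,b,c,d) = [[a,c,d],[0,b,0],[0,0,b]] over GF(2). -/
def m (a b c d : ZMod 2) : Matrix (Fin 3) (Fin 3) (ZMod 2) :=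
  !![a, c, d; 0, b, 0; 0, 0, b]

lemma m_mul (a b c d a' b' c' d' : ZMod 2) :
    m a b c d * m a' b' c' d' =
      m (a * a') (b * b') (a * c' + c * b') (a * d' + d * b') := by
  ext i j
  fin_cases i <;> fin_cases j <;>
    simp [m, Matrix.mul_apply, Fin.sum_univ_three, Matrix.vecHead, Matrix.vecTail]

/-- The ring R, as a subring of the 3×3 matrices over GF(2). -/
def Rring : Subring (Matrix (Fin 3) (Fin 3) (ZMod 2)) where
  carrier := {A | ∃ a b c d : ZMod 2, A = m a b c d}
  zero_mem' := ⟨0, 0, 0, 0, by ext i j; fin_cases i <;> fin_cases j <;> simp [m, Matrix.vecHead, Matrix.vecTail]⟩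
  one_mem' := ⟨1, 1, 0, 0, by ext i j; fin_cases i <;> fin_cases j <;> simp [m, Matrix.one_apply, Matrix.vecHead, Matrix.vecTail]⟩
  add_mem' := by
    rintro A B ⟨a, b, c, d, rfl⟩ ⟨a', b', c', d', rfl⟩
    exact ⟨a + a', b + b', c + c', d + d',
      by ext i j; fin_cases i <;> fin_cases j <;> simp [m, Matrix.vecHead, Matrix.vecTail]⟩
  neg_mem' := by
    rintro A ⟨a, b, c, d, rfl⟩
    exact ⟨-a, -b, -c, -d,
      by ext i j; fin_cases i <;> fin_cases j <;> simp [m, Matrix.vecHead, Matrix.vecTail]⟩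
  mul_mem' := by
    rintro A B ⟨a, b, c, d, rfl⟩ ⟨a', b', c', d', rfl⟩
    exact ⟨a * a', b * b', a * c' + c * b', a * d' + d * b', m_mul a b c d a' b' c' d'⟩

lemma m_mem (a b c d : ZMod 2) : m a b c d ∈ Rring := ⟨a, b, c, d, rfl⟩

/-- The element m(a,b,c,d) viewed as an element of the ring R. -/
def mm (a b c d : ZMod 2) : Rring := ⟨m a b c d, m_mem a b c d⟩

/-- The cyclic left submodule R(x,y) = {(αx, αy) : α ∈ R} of R², as a set of vectors. -/
def RM (x y : Rring) : Set (Rring × Rring) := {p | ∃ α : Rring, p = (α * x, α * y)}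

def t : Rring := mm 0 0 1 0
def f : Rring := mm 0 0 1 1
def s : Rring := mm 0 0 0 1
def e : Rring := mm 0 1 0 0
def u : Rring := mm 0 1 1 0
def v : Rring := mm 0 1 1 1
def w : Rring := mm 0 1 0 1

/-- The nine distinguished generators. -/
def gens : List (Rring × Rring) :=
  [(t, e), (f, e), (s, e), (e, u), (e, v), (e, w), (e, s), (e, f), (e, t)]

/-- A duad: a 2-element subset of the 6-element set. -/
def IsDuad (p : Finset (Fin 6)) : Prop := p.card = 2

/-- A syntheme: a set of three duads partitioning the 6-element set. -/
def IsSyntheme (L : Finset (Finset (Fin 6))) : Prop :=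
  L.card = 3 ∧ (∀ p ∈ L, IsDuad p) ∧ ∀ i : Fin 6, ∃! p, p ∈ L ∧ i ∈ p

/-- The bijection β from the 15 duads (2-subsets of Fin 6, with 0,…,5 standing for
1,…,6) to the 15 nonzero vectors of J × J. -/
def β (p : Finset (Fin 6)) : Rring × Rring :=
  if p = {0, 1} then (t, t)
  else if p = {0, 2} then (f, t)
  else if p = {0, 3} then (0, s)
  else if p = {0, 4} then (t, s)
  else if p = {0, 5} then (f, 0)
  else if p = {1, 2} then (s, 0)
  else if p = {1, 3} then (t, f)
  else if p = {1, 4} then (0, f)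
  else if p = {1, 5} then (s, t)
  else if p = {2, 3} then (f, f)
  else if p = {2, 4} then (s, f)
  else if p = {2, 5} then (0, t)
  else if p = {3, 4} then (t, 0)
  else if p = {3, 5} then (f, s)
  else if p = {4, 5} then (s, s)
  else 0

/-- D(x,y): the set of duads whose β-image lies in the submodule R(x,y). -/
def Dset (x y : Rring) : Set (Finset (Fin 6)) := {p | IsDuad p ∧ β p ∈ RM x y}


lemma zero_mm : (0 : Rring) = mm 0 0 0 0 :=
  Subtype.ext (by ext i j; fin_cases i <;> fin_cases j <;>
    simp [mm, m, Matrix.vecHead, Matrix.vecTail])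

lemma mm_mul (a b c d a' b' c' d' : ZMod 2) :
    mm a b c d * mm a' b' c' d' =
      mm (a * a') (b * b') (a * c' + c * b') (a * d' + d * b') :=
  Subtype.ext (m_mul a b c d a' b' c' d')

lemma m_inj {a b c d a' b' c' d' : ZMod 2} :
    m a b c d = m a' b' c' d' ↔ (a = a' ∧ b = b' ∧ c = c' ∧ d = d') := by
  constructor
  · intro h
    exact ⟨by simpa [m] using congrFun (congrFun h 0) 0,
           by simpa [m] using congrFun (congrFun h 1) 1,
           by simpa [m] using congrFun (congrFun h 0) 1,
           by simpa [m] using congrFun (congrFun h 0) 2⟩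
  · rintro ⟨rfl, rfl, rfl, rfl⟩; rfl

lemma mm_inj {a b c d a' b' c' d' : ZMod 2} :
    mm a b c d = mm a' b' c' d' ↔ (a = a' ∧ b = b' ∧ c = c' ∧ d = d') :=
  Subtype.ext_iff.trans m_inj

lemma mul_t (a b c d : ZMod 2) : mm a b c d * t = mm 0 0 a 0 := by
  rw [show t = mm 0 0 1 0 from rfl, mm_mul]; ring_nf

lemma mul_f (a b c d : ZMod 2) : mm a b c d * f = mm 0 0 a a := by
  rw [show f = mm 0 0 1 1 from rfl, mm_mul]; ring_nf

lemma mul_s (a b c d : ZMod 2) : mm a b c d * s = mm 0 0 0 a := by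
  rw [show s = mm 0 0 0 1 from rfl, mm_mul]; ring_nf

lemma mul_e (a b c d : ZMod 2) : mm a b c d * e = mm 0 b c d := by
  rw [show e = mm 0 1 0 0 from rfl, mm_mul]; ring_nf

lemma mul_u (a b c d : ZMod 2) : mm a b c d * u = mm 0 b (a + c) d := by
  rw [show u = mm 0 1 1 0 from rfl, mm_mul]; ring_nf

lemma mul_v (a b c d : ZMod 2) : mm a b c d * v = mm 0 b (a + c) (a + d) := by
  rw [show v = mm 0 1 1 1 from rfl, mm_mul]; ring_nf

lemma mul_w (a b c d : ZMod 2) : mm a b c d * w = mm 0 b c (a + d) := by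
  rw [show w = mm 0 1 0 1 from rfl, mm_mul]; ring_nf

/-- The scalar version of β: the (c,d)-coordinates of each component. -/
def βJ (p : Finset (Fin 6)) : (ZMod 2 × ZMod 2) × (ZMod 2 × ZMod 2) :=
  if p = {0, 1} then ((1,0), (1,0))
  else if p = {0, 2} then ((1,1), (1,0))
  else if p = {0, 3} then ((0,0), (0,1))
  else if p = {0, 4} then ((1,0), (0,1))
  else if p = {0, 5} then ((1,1), (0,0))
  else if p = {1, 2} then ((0,1), (0,0))
  else if p = {1, 3} then ((1,0), (1,1))
  else if p = {1, 4} then ((0,0), (1,1))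
  else if p = {1, 5} then ((0,1), (1,0))
  else if p = {2, 3} then ((1,1), (1,1))
  else if p = {2, 4} then ((0,1), (1,1))
  else if p = {2, 5} then ((0,0), (1,0))
  else if p = {3, 4} then ((1,0), (0,0))
  else if p = {3, 5} then ((1,1), (0,1))
  else if p = {4, 5} then ((0,1), (0,1))
  else ((0,0), (0,0))

set_option maxHeartbeats 1000000 in
lemma β_eq (p : Finset (Fin 6)) :
    β p = (mm 0 0 (βJ p).1.1 (βJ p).1.2, mm 0 0 (βJ p).2.1 (βJ p).2.2) := by
  by_cases h1 : p = {0, 1}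
  · subst h1; decide
  by_cases h2 : p = {0, 2}
  · subst h2; decide
  by_cases h3 : p = {0, 3}
  · subst h3; decide
  by_cases h4 : p = {0, 4}
  · subst h4; decide
  by_cases h5 : p = {0, 5}
  · subst h5; decide
  by_cases h6 : p = {1, 2}
  · subst h6; decide
  by_cases h7 : p = {1, 3}
  · subst h7; decide
  by_cases h8 : p = {1, 4}
  · subst h8; decide
  by_cases h9 : p = {1, 5}
  · subst h9; decide
  by_cases h10 : p = {2, 3}
  · subst h10; decide
  by_cases h11 : p = {2, 4}
  · subst h11; decide
  by_cases h12 : p = {2, 5}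
  · subst h12; decide
  by_cases h13 : p = {3, 4}
  · subst h13; decide
  by_cases h14 : p = {3, 5}
  · subst h14; decide
  by_cases h15 : p = {4, 5}
  · subst h15; decide
  simp only [β, βJ, if_neg h1, if_neg h2, if_neg h3, if_neg h4, if_neg h5, if_neg h6, if_neg h7, if_neg h8, if_neg h9, if_neg h10, if_neg h11, if_neg h12, if_neg h13, if_neg h14, if_neg h15]
  exact Prod.ext_iff.mpr ⟨zero_mm, zero_mm⟩

lemma mem_RM_iff (x y : Rring) (z : Rring × Rring) :
    z ∈ RM x y ↔ ∃ a b c d : ZMod 2, z = (mm a b c d * x, mm a b c d * y) := by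
  constructor
  · rintro ⟨α, rfl⟩
    obtain ⟨a, b, c, d, h⟩ := α.2
    exact ⟨a, b, c, d, by rw [show α = mm a b c d from Subtype.ext h]⟩
  · rintro ⟨a, b, c, d, rfl⟩
    exact ⟨mm a b c d, rfl⟩

lemma mem_Dset (x y : Rring) (p : Finset (Fin 6)) :
    p ∈ Dset x y ↔ IsDuad p ∧
      ∃ a b c d : ZMod 2, β p = (mm a b c d * x, mm a b c d * y) := by
  unfold Dset
  rw [Set.mem_setOf_eq, mem_RM_iff]

instance (p : Finset (Fin 6)) : Decidable (IsDuad p) :=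
  inferInstanceAs (Decidable (_ = 2))

instance (L : Finset (Finset (Fin 6))) : Decidable (IsSyntheme L) := by
  unfold IsSyntheme IsDuad ExistsUnique; infer_instance


lemma Dset_te : Dset t e = (↑({{0, 1}, {0, 3}, {0, 4}, {1, 3}, {1, 4}, {2, 5}, {3, 4}} : Finset (Finset (Fin 6))) : Set _) := by
  ext q
  rw [Finset.mem_coe, mem_Dset]
  simp only [β_eq, mul_t, mul_e, Prod.mk.injEq, mm_inj]
  revert q
  decide

lemma Dset_fe : Dset f e = (↑({{0, 2}, {0, 3}, {0, 5}, {1, 4}, {2, 3}, {2, 5}, {3, 5}} : Finset (Finset (Fin 6))) : Set _) := by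
  ext q
  rw [Finset.mem_coe, mem_Dset]
  simp only [β_eq, mul_f, mul_e, Prod.mk.injEq, mm_inj]
  revert q
  decide

lemma Dset_se : Dset s e = (↑({{0, 3}, {1, 2}, {1, 4}, {1, 5}, {2, 4}, {2, 5}, {4, 5}} : Finset (Finset (Fin 6))) : Set _) := by
  ext q
  rw [Finset.mem_coe, mem_Dset]
  simp only [β_eq, mul_s, mul_e, Prod.mk.injEq, mm_inj]
  revert q
  decide

lemma Dset_eu : Dset e u = (↑({{0, 1}, {2, 3}, {2, 4}, {2, 5}, {3, 4}, {3, 5}, {4, 5}} : Finset (Finset (Fin 6))) : Set _) := by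
  ext q
  rw [Finset.mem_coe, mem_Dset]
  simp only [β_eq, mul_e, mul_u, Prod.mk.injEq, mm_inj]
  revert q
  decide

lemma Dset_ev : Dset e v = (↑({{0, 1}, {0, 4}, {0, 5}, {1, 4}, {1, 5}, {2, 3}, {4, 5}} : Finset (Finset (Fin 6))) : Set _) := by
  ext q
  rw [Finset.mem_coe, mem_Dset]
  simp only [β_eq, mul_e, mul_v, Prod.mk.injEq, mm_inj]
  revert q
  decide

lemma Dset_ew : Dset e w = (↑({{0, 1}, {0, 2}, {0, 3}, {1, 2}, {1, 3}, {2, 3}, {4, 5}} : Finset (Finset (Fin 6))) : Set _) := by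
  ext q
  rw [Finset.mem_coe, mem_Dset]
  simp only [β_eq, mul_e, mul_w, Prod.mk.injEq, mm_inj]
  revert q
  decide

lemma Dset_es : Dset e s = (↑({{0, 3}, {0, 4}, {0, 5}, {1, 2}, {3, 4}, {3, 5}, {4, 5}} : Finset (Finset (Fin 6))) : Set _) := by
  ext q
  rw [Finset.mem_coe, mem_Dset]
  simp only [β_eq, mul_e, mul_s, Prod.mk.injEq, mm_inj]
  revert q
  decide

lemma Dset_ef : Dset e f = (↑({{0, 5}, {1, 2}, {1, 3}, {1, 4}, {2, 3}, {2, 4}, {3, 4}} : Finset (Finset (Fin 6))) : Set _) := by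
  ext q
  rw [Finset.mem_coe, mem_Dset]
  simp only [β_eq, mul_e, mul_f, Prod.mk.injEq, mm_inj]
  revert q
  decide

lemma Dset_et : Dset e t = (↑({{0, 1}, {0, 2}, {0, 5}, {1, 2}, {1, 5}, {2, 5}, {3, 4}} : Finset (Finset (Fin 6))) : Set _) := by
  ext q
  rw [Finset.mem_coe, mem_Dset]
  simp only [β_eq, mul_e, mul_t, Prod.mk.injEq, mm_inj]
  revert q
  decide

/-- For each of the nine distinguished generators (x,y), the trace D(x,y) consists of
7 duads forming three concurrent lines of the doily: there are a duad p and three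
distinct synthemes through p whose union is D(x,y) and which pairwise meet in {p}. -/
theorem traces_are_three_concurrent_lines :
    ∀ g ∈ gens, ∃ p : Finset (Fin 6), IsDuad p ∧
      ∃ L1 L2 L3 : Finset (Finset (Fin 6)),
        IsSyntheme L1 ∧ IsSyntheme L2 ∧ IsSyntheme L3 ∧
        L1 ≠ L2 ∧ L1 ≠ L3 ∧ L2 ≠ L3 ∧
        p ∈ L1 ∧ p ∈ L2 ∧ p ∈ L3 ∧
        Dset g.1 g.2 = ↑L1 ∪ ↑L2 ∪ ↑L3 ∧
        (↑L1 ∩ ↑L2 : Set (Finset (Fin 6))) = {p} ∧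
        (↑L1 ∩ ↑L3 : Set (Finset (Fin 6))) = {p} ∧
        (↑L2 ∩ ↑L3 : Set (Finset (Fin 6))) = {p} ∧
        (Dset g.1 g.2).ncard = 7 := by
  intro g hg
  fin_cases hg
  · refine ⟨{2, 5}, by decide, {{0, 1}, {2, 5}, {3, 4}}, {{0, 3}, {1, 4}, {2, 5}}, {{0, 4}, {1, 3}, {2, 5}},
      by decide, by decide, by decide, by decide, by decide, by decide,
      by decide, by decide, by decide, ?_, ?_, ?_, ?_, ?_⟩
    · rw [Dset_te, show ({{0, 1}, {0, 3}, {0, 4}, {1, 3}, {1, 4}, {2, 5}, {3, 4}} : Finset (Finset (Fin 6))) =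
        {{0, 1}, {2, 5}, {3, 4}} ∪ {{0, 3}, {1, 4}, {2, 5}} ∪ {{0, 4}, {1, 3}, {2, 5}} from by decide,
        Finset.coe_union, Finset.coe_union]
    · rw [← Finset.coe_inter, show ({{0, 1}, {2, 5}, {3, 4}} : Finset (Finset (Fin 6))) ∩ {{0, 3}, {1, 4}, {2, 5}} = {{2, 5}} from by decide, Finset.coe_singleton]
    · rw [← Finset.coe_inter, show ({{0, 1}, {2, 5}, {3, 4}} : Finset (Finset (Fin 6))) ∩ {{0, 4}, {1, 3}, {2, 5}} = {{2, 5}} from by decide, Finset.coe_singleton]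
    · rw [← Finset.coe_inter, show ({{0, 3}, {1, 4}, {2, 5}} : Finset (Finset (Fin 6))) ∩ {{0, 4}, {1, 3}, {2, 5}} = {{2, 5}} from by decide, Finset.coe_singleton]
    · rw [Dset_te, Set.ncard_coe_finset]
      decide
  · refine ⟨{1, 4}, by decide, {{0, 2}, {1, 4}, {3, 5}}, {{0, 3}, {1, 4}, {2, 5}}, {{0, 5}, {1, 4}, {2, 3}},
      by decide, by decide, by decide, by decide, by decide, by decide,
      by decide, by decide, by decide, ?_, ?_, ?_, ?_, ?_⟩
    · rw [Dset_fe, show ({{0, 2}, {0, 3}, {0, 5}, {1, 4}, {2, 3}, {2, 5}, {3, 5}} : Finset (Finset (Fin 6))) =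
        {{0, 2}, {1, 4}, {3, 5}} ∪ {{0, 3}, {1, 4}, {2, 5}} ∪ {{0, 5}, {1, 4}, {2, 3}} from by decide,
        Finset.coe_union, Finset.coe_union]
    · rw [← Finset.coe_inter, show ({{0, 2}, {1, 4}, {3, 5}} : Finset (Finset (Fin 6))) ∩ {{0, 3}, {1, 4}, {2, 5}} = {{1, 4}} from by decide, Finset.coe_singleton]
    · rw [← Finset.coe_inter, show ({{0, 2}, {1, 4}, {3, 5}} : Finset (Finset (Fin 6))) ∩ {{0, 5}, {1, 4}, {2, 3}} = {{1, 4}} from by decide, Finset.coe_singleton]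
    · rw [← Finset.coe_inter, show ({{0, 3}, {1, 4}, {2, 5}} : Finset (Finset (Fin 6))) ∩ {{0, 5}, {1, 4}, {2, 3}} = {{1, 4}} from by decide, Finset.coe_singleton]
    · rw [Dset_fe, Set.ncard_coe_finset]
      decide
  · refine ⟨{0, 3}, by decide, {{0, 3}, {1, 2}, {4, 5}}, {{0, 3}, {1, 4}, {2, 5}}, {{0, 3}, {1, 5}, {2, 4}},
      by decide, by decide, by decide, by decide, by decide, by decide,
      by decide, by decide, by decide, ?_, ?_, ?_, ?_, ?_⟩
    · rw [Dset_se, show ({{0, 3}, {1, 2}, {1, 4}, {1, 5}, {2, 4}, {2, 5}, {4, 5}} : Finset (Finset (Fin 6))) =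
        {{0, 3}, {1, 2}, {4, 5}} ∪ {{0, 3}, {1, 4}, {2, 5}} ∪ {{0, 3}, {1, 5}, {2, 4}} from by decide,
        Finset.coe_union, Finset.coe_union]
    · rw [← Finset.coe_inter, show ({{0, 3}, {1, 2}, {4, 5}} : Finset (Finset (Fin 6))) ∩ {{0, 3}, {1, 4}, {2, 5}} = {{0, 3}} from by decide, Finset.coe_singleton]
    · rw [← Finset.coe_inter, show ({{0, 3}, {1, 2}, {4, 5}} : Finset (Finset (Fin 6))) ∩ {{0, 3}, {1, 5}, {2, 4}} = {{0, 3}} from by decide, Finset.coe_singleton]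
    · rw [← Finset.coe_inter, show ({{0, 3}, {1, 4}, {2, 5}} : Finset (Finset (Fin 6))) ∩ {{0, 3}, {1, 5}, {2, 4}} = {{0, 3}} from by decide, Finset.coe_singleton]
    · rw [Dset_se, Set.ncard_coe_finset]
      decide
  · refine ⟨{0, 1}, by decide, {{0, 1}, {2, 3}, {4, 5}}, {{0, 1}, {2, 4}, {3, 5}}, {{0, 1}, {2, 5}, {3, 4}},
      by decide, by decide, by decide, by decide, by decide, by decide,
      by decide, by decide, by decide, ?_, ?_, ?_, ?_, ?_⟩
    · rw [Dset_eu, show ({{0, 1}, {2, 3}, {2, 4}, {2, 5}, {3, 4}, {3, 5}, {4, 5}} : Finset (Finset (Fin 6))) =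
        {{0, 1}, {2, 3}, {4, 5}} ∪ {{0, 1}, {2, 4}, {3, 5}} ∪ {{0, 1}, {2, 5}, {3, 4}} from by decide,
        Finset.coe_union, Finset.coe_union]
    · rw [← Finset.coe_inter, show ({{0, 1}, {2, 3}, {4, 5}} : Finset (Finset (Fin 6))) ∩ {{0, 1}, {2, 4}, {3, 5}} = {{0, 1}} from by decide, Finset.coe_singleton]
    · rw [← Finset.coe_inter, show ({{0, 1}, {2, 3}, {4, 5}} : Finset (Finset (Fin 6))) ∩ {{0, 1}, {2, 5}, {3, 4}} = {{0, 1}} from by decide, Finset.coe_singleton]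
    · rw [← Finset.coe_inter, show ({{0, 1}, {2, 4}, {3, 5}} : Finset (Finset (Fin 6))) ∩ {{0, 1}, {2, 5}, {3, 4}} = {{0, 1}} from by decide, Finset.coe_singleton]
    · rw [Dset_eu, Set.ncard_coe_finset]
      decide
  · refine ⟨{2, 3}, by decide, {{0, 1}, {2, 3}, {4, 5}}, {{0, 4}, {1, 5}, {2, 3}}, {{0, 5}, {1, 4}, {2, 3}},
      by decide, by decide, by decide, by decide, by decide, by decide,
      by decide, by decide, by decide, ?_, ?_, ?_, ?_, ?_⟩
    · rw [Dset_ev, show ({{0, 1}, {0, 4}, {0, 5}, {1, 4}, {1, 5}, {2, 3}, {4, 5}} : Finset (Finset (Fin 6))) =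
        {{0, 1}, {2, 3}, {4, 5}} ∪ {{0, 4}, {1, 5}, {2, 3}} ∪ {{0, 5}, {1, 4}, {2, 3}} from by decide,
        Finset.coe_union, Finset.coe_union]
    · rw [← Finset.coe_inter, show ({{0, 1}, {2, 3}, {4, 5}} : Finset (Finset (Fin 6))) ∩ {{0, 4}, {1, 5}, {2, 3}} = {{2, 3}} from by decide, Finset.coe_singleton]
    · rw [← Finset.coe_inter, show ({{0, 1}, {2, 3}, {4, 5}} : Finset (Finset (Fin 6))) ∩ {{0, 5}, {1, 4}, {2, 3}} = {{2, 3}} from by decide, Finset.coe_singleton]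
    · rw [← Finset.coe_inter, show ({{0, 4}, {1, 5}, {2, 3}} : Finset (Finset (Fin 6))) ∩ {{0, 5}, {1, 4}, {2, 3}} = {{2, 3}} from by decide, Finset.coe_singleton]
    · rw [Dset_ev, Set.ncard_coe_finset]
      decide
  · refine ⟨{4, 5}, by decide, {{0, 1}, {2, 3}, {4, 5}}, {{0, 2}, {1, 3}, {4, 5}}, {{0, 3}, {1, 2}, {4, 5}},
      by decide, by decide, by decide, by decide, by decide, by decide,
      by decide, by decide, by decide, ?_, ?_, ?_, ?_, ?_⟩
    · rw [Dset_ew, show ({{0, 1}, {0, 2}, {0, 3}, {1, 2}, {1, 3}, {2, 3}, {4, 5}} : Finset (Finset (Fin 6))) =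
        {{0, 1}, {2, 3}, {4, 5}} ∪ {{0, 2}, {1, 3}, {4, 5}} ∪ {{0, 3}, {1, 2}, {4, 5}} from by decide,
        Finset.coe_union, Finset.coe_union]
    · rw [← Finset.coe_inter, show ({{0, 1}, {2, 3}, {4, 5}} : Finset (Finset (Fin 6))) ∩ {{0, 2}, {1, 3}, {4, 5}} = {{4, 5}} from by decide, Finset.coe_singleton]
    · rw [← Finset.coe_inter, show ({{0, 1}, {2, 3}, {4, 5}} : Finset (Finset (Fin 6))) ∩ {{0, 3}, {1, 2}, {4, 5}} = {{4, 5}} from by decide, Finset.coe_singleton]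
    · rw [← Finset.coe_inter, show ({{0, 2}, {1, 3}, {4, 5}} : Finset (Finset (Fin 6))) ∩ {{0, 3}, {1, 2}, {4, 5}} = {{4, 5}} from by decide, Finset.coe_singleton]
    · rw [Dset_ew, Set.ncard_coe_finset]
      decide
  · refine ⟨{1, 2}, by decide, {{0, 3}, {1, 2}, {4, 5}}, {{0, 4}, {1, 2}, {3, 5}}, {{0, 5}, {1, 2}, {3, 4}},
      by decide, by decide, by decide, by decide, by decide, by decide,
      by decide, by decide, by decide, ?_, ?_, ?_, ?_, ?_⟩
    · rw [Dset_es, show ({{0, 3}, {0, 4}, {0, 5}, {1, 2}, {3, 4}, {3, 5}, {4, 5}} : Finset (Finset (Fin 6))) =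
        {{0, 3}, {1, 2}, {4, 5}} ∪ {{0, 4}, {1, 2}, {3, 5}} ∪ {{0, 5}, {1, 2}, {3, 4}} from by decide,
        Finset.coe_union, Finset.coe_union]
    · rw [← Finset.coe_inter, show ({{0, 3}, {1, 2}, {4, 5}} : Finset (Finset (Fin 6))) ∩ {{0, 4}, {1, 2}, {3, 5}} = {{1, 2}} from by decide, Finset.coe_singleton]
    · rw [← Finset.coe_inter, show ({{0, 3}, {1, 2}, {4, 5}} : Finset (Finset (Fin 6))) ∩ {{0, 5}, {1, 2}, {3, 4}} = {{1, 2}} from by decide, Finset.coe_singleton]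
    · rw [← Finset.coe_inter, show ({{0, 4}, {1, 2}, {3, 5}} : Finset (Finset (Fin 6))) ∩ {{0, 5}, {1, 2}, {3, 4}} = {{1, 2}} from by decide, Finset.coe_singleton]
    · rw [Dset_es, Set.ncard_coe_finset]
      decide
  · refine ⟨{0, 5}, by decide, {{0, 5}, {1, 2}, {3, 4}}, {{0, 5}, {1, 3}, {2, 4}}, {{0, 5}, {1, 4}, {2, 3}},
      by decide, by decide, by decide, by decide, by decide, by decide,
      by decide, by decide, by decide, ?_, ?_, ?_, ?_, ?_⟩
    · rw [Dset_ef, show ({{0, 5}, {1, 2}, {1, 3}, {1, 4}, {2, 3}, {2, 4}, {3, 4}} : Finset (Finset (Fin 6))) =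
        {{0, 5}, {1, 2}, {3, 4}} ∪ {{0, 5}, {1, 3}, {2, 4}} ∪ {{0, 5}, {1, 4}, {2, 3}} from by decide,
        Finset.coe_union, Finset.coe_union]
    · rw [← Finset.coe_inter, show ({{0, 5}, {1, 2}, {3, 4}} : Finset (Finset (Fin 6))) ∩ {{0, 5}, {1, 3}, {2, 4}} = {{0, 5}} from by decide, Finset.coe_singleton]
    · rw [← Finset.coe_inter, show ({{0, 5}, {1, 2}, {3, 4}} : Finset (Finset (Fin 6))) ∩ {{0, 5}, {1, 4}, {2, 3}} = {{0, 5}} from by decide, Finset.coe_singleton]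
    · rw [← Finset.coe_inter, show ({{0, 5}, {1, 3}, {2, 4}} : Finset (Finset (Fin 6))) ∩ {{0, 5}, {1, 4}, {2, 3}} = {{0, 5}} from by decide, Finset.coe_singleton]
    · rw [Dset_ef, Set.ncard_coe_finset]
      decide
  · refine ⟨{3, 4}, by decide, {{0, 1}, {2, 5}, {3, 4}}, {{0, 2}, {1, 5}, {3, 4}}, {{0, 5}, {1, 2}, {3, 4}},
      by decide, by decide, by decide, by decide, by decide, by decide,
      by decide, by decide, by decide, ?_, ?_, ?_, ?_, ?_⟩
    · rw [Dset_et, show ({{0, 1}, {0, 2}, {0, 5}, {1, 2}, {1, 5}, {2, 5}, {3, 4}} : Finset (Finset (Fin 6))) =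
        {{0, 1}, {2, 5}, {3, 4}} ∪ {{0, 2}, {1, 5}, {3, 4}} ∪ {{0, 5}, {1, 2}, {3, 4}} from by decide,
        Finset.coe_union, Finset.coe_union]
    · rw [← Finset.coe_inter, show ({{0, 1}, {2, 5}, {3, 4}} : Finset (Finset (Fin 6))) ∩ {{0, 2}, {1, 5}, {3, 4}} = {{3, 4}} from by decide, Finset.coe_singleton]
    · rw [← Finset.coe_inter, show ({{0, 1}, {2, 5}, {3, 4}} : Finset (Finset (Fin 6))) ∩ {{0, 5}, {1, 2}, {3, 4}} = {{3, 4}} from by decide, Finset.coe_singleton]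
    · rw [← Finset.coe_inter, show ({{0, 2}, {1, 5}, {3, 4}} : Finset (Finset (Fin 6))) ∩ {{0, 5}, {1, 2}, {3, 4}} = {{3, 4}} from by decide, Finset.coe_singleton]
    · rw [Dset_et, Set.ncard_coe_finset]
      decide
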